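/- Let Γ be a finite directed multigraph. Then the set of bi-infinite paths of Γ is uncountable if and only if there exist a vertex v, a positive integer ℓ, and two distinct closed walks of length ℓ based at v. -/

import Mathlib

/-- A finite directed multigraph: edges with source and target maps. -/
structure DirMultigraph (V E : Type*) where
  s : E → V
  t : E → V

/-- A bi-infinite path in a directed multigraph. -/
def DirMultigraph.IsBiInfinitePath {V E : Type*} (G : DirMultigraph V E) (f : ℤ → E) : Prop :=
  ∀ n : ℤ, G.t (f n) = G.s (f (n + 1))

/-- `w 0, w 1, …, w (ℓ-1)` is a closed walk of length `ℓ` based at the vertex `v`. -/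
def DirMultigraph.IsClosedWalk {V E : Type*} (G : DirMultigraph V E) (v : V) (ℓ : ℕ)
    (w : ℕ → E) : Prop :=
  G.s (w 0) = v ∧ G.t (w (ℓ - 1)) = v ∧ ∀ i : ℕ, i + 1 < ℓ → G.t (w i) = G.s (w (i + 1))

namespace Stmt12Aux

variable {V E : Type*} {G : DirMultigraph V E}

lemma findex (f : ℤ → E) {x y : ℤ} (h : x = y) : f x = f y := by rw [h]

lemma compare (f : ℤ → E) (hf : G.IsBiInfinitePath f)
    (H : ∀ (v : V) (ℓ : ℕ), 0 < ℓ → ∀ w₁ w₂ : ℕ → E,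
      G.IsClosedWalk v ℓ w₁ → G.IsClosedWalk v ℓ w₂ → ∀ i < ℓ, w₁ i = w₂ i)
    (p q r : ℤ) (hpq : p < q) (hqr : q < r)
    (hpq' : G.s (f p) = G.s (f q)) (hqr' : G.s (f q) = G.s (f r)) :
    ∀ i : ℕ, (i : ℤ) < r - p →
      f (p + i) = if (i : ℤ) < r - q then f (q + i) else f (p + i - (r - q)) := by
  obtain ⟨ℓ, hℓ⟩ : ∃ ℓ : ℕ, (ℓ : ℤ) = r - p :=
    ⟨(r - p).toNat, Int.toNat_of_nonneg (by omega)⟩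
  set P : ℕ → E := fun i => f (p + i) with hP
  set Q : ℕ → E := fun i =>
    if (i : ℤ) < r - q then f (q + i) else f (p + i - (r - q)) with hQ
  have hPwalk : G.IsClosedWalk (G.s (f p)) ℓ P := by
    refine ⟨by simp [hP], ?_, ?_⟩
    · simp only [hP]
      rw [findex f (show p + ((ℓ - 1 : ℕ) : ℤ) = r - 1 by omega), hf (r - 1),
        findex f (show r - 1 + 1 = r by ring)]
      rw [hpq', hqr']
    · intro i hi
      simp only [hP]
      rw [hf (p + i)]
      exact congrArg G.s (findex f (by push_cast; ring))
  have hQwalk : G.IsClosedWalk (G.s (f p)) ℓ Q := by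
    refine ⟨?_, ?_, ?_⟩
    · simp only [hQ]
      rw [if_pos (show ((0 : ℕ) : ℤ) < r - q by omega)]
      rw [findex f (show q + ((0:ℕ):ℤ) = q by simp), hpq']
    · simp only [hQ]
      rw [if_neg (show ¬ (((ℓ - 1 : ℕ) : ℤ) < r - q) by omega),
        findex f (show p + ((ℓ - 1 : ℕ) : ℤ) - (r - q) = q - 1 by omega),
        hf (q - 1), findex f (show q - 1 + 1 = q by ring), hpq']
    · intro i hi
      have hiℓ : (i : ℤ) + 1 + 1 ≤ r - p := by
        have : (i : ℕ) + 1 < ℓ := hi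
        omega
      simp only [hQ]
      by_cases h1 : ((i : ℤ) + 1) < r - q
      · rw [if_pos (show (i : ℤ) < r - q by omega),
          if_pos (show (((i+1 : ℕ)) : ℤ) < r - q by push_cast; omega),
          hf (q + i)]
        exact congrArg G.s (findex f (by push_cast; ring))
      · by_cases h2 : ((i : ℤ)) < r - q
        · -- boundary: i = r - q - 1
          rw [if_pos h2, if_neg (show ¬ (((i+1 : ℕ) : ℤ) < r - q) by push_cast; omega),
            findex f (show q + (i : ℤ) = r - 1 by omega), hf (r - 1),
            findex f (show r - 1 + 1 = r by ring),
            findex f (show p + ((i+1 : ℕ) : ℤ) - (r - q) = p by push_cast; omega)]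
          rw [hpq', hqr']
        · rw [if_neg h2, if_neg (show ¬ (((i+1 : ℕ) : ℤ) < r - q) by push_cast; omega),
            hf (p + i - (r - q))]
          exact congrArg G.s (findex f (by push_cast; ring))
  intro i hi
  have hiℓ : i < ℓ := by omega
  exact H (G.s (f p)) ℓ (by omega) P Q hPwalk hQwalk i hiℓ

end Stmt12Aux

namespace Stmt12Aux

variable {V E : Type*} {G : DirMultigraph V E}

lemma fwd_periodic [Finite V] (f : ℤ → E) (hf : G.IsBiInfinitePath f)
    (H : ∀ (v : V) (ℓ : ℕ), 0 < ℓ → ∀ w₁ w₂ : ℕ → E,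
      G.IsClosedWalk v ℓ w₁ → G.IsClosedWalk v ℓ w₂ → ∀ i < ℓ, w₁ i = w₂ i) :
    ∃ (n : ℤ) (a : ℕ), 0 < a ∧ ∀ k : ℤ, n ≤ k → f (k + a) = f k := by
  obtain ⟨v, hv⟩ := Finite.exists_infinite_fiber (fun k : ℕ => G.s (f k))
  rw [Set.infinite_coe_iff] at hv
  obtain ⟨p, hp, -⟩ := hv.exists_gt 0
  obtain ⟨q, hq, hpq⟩ := hv.exists_gt p
  refine ⟨(p : ℤ), q - p, by omega, ?_⟩
  intro k hk
  obtain ⟨r, hr, hrbig⟩ := hv.exists_gt (max q (k + (q - p)).toNat)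
  have hrq : q < r := lt_of_le_of_lt (le_max_left _ _) hrbig
  have hrk : k + ((q - p : ℕ) : ℤ) < (r : ℤ) := by
    have h1 : (k + (q - p)).toNat < r := lt_of_le_of_lt (le_max_right _ _) hrbig
    have h2 : k + ((q - p : ℕ) : ℤ) ≤ ((k + (q - p)).toNat : ℤ) := by
      push_cast; omega
    omega
  have hcomp := compare f hf H p q r (by exact_mod_cast hpq) (by exact_mod_cast hrq)
    (by simp only [Set.mem_preimage, Set.mem_singleton_iff] at hp hq; rw [hp, hq])
    (by simp only [Set.mem_preimage, Set.mem_singleton_iff] at hq hr; rw [hq, hr]) (k - p).toNat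
    (by push_cast; omega)
  rw [if_pos (by push_cast; omega)] at hcomp
  calc f (k + ((q - p : ℕ) : ℤ)) = f ((q : ℤ) + ((k - p).toNat : ℤ)) := by
        exact findex f (by push_cast; omega)
    _ = f ((p : ℤ) + ((k - p).toNat : ℤ)) := hcomp.symm
    _ = f k := findex f (by push_cast; omega)

lemma bwd_periodic [Finite V] (f : ℤ → E) (hf : G.IsBiInfinitePath f)
    (H : ∀ (v : V) (ℓ : ℕ), 0 < ℓ → ∀ w₁ w₂ : ℕ → E,
      G.IsClosedWalk v ℓ w₁ → G.IsClosedWalk v ℓ w₂ → ∀ i < ℓ, w₁ i = w₂ i) :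
    ∃ (m : ℤ) (b : ℕ), 0 < b ∧ ∀ k : ℤ, k ≤ m → f (k - b) = f k := by
  obtain ⟨v, hv⟩ := Finite.exists_infinite_fiber (fun k : ℕ => G.s (f (-(k : ℤ))))
  rw [Set.infinite_coe_iff] at hv
  obtain ⟨q₁, hq₁, -⟩ := hv.exists_gt 0
  obtain ⟨q₂, hq₂, h12⟩ := hv.exists_gt q₁
  -- occurrences at r := -q₁ > q := -q₂ ; period b := q₂ - q₁
  refine ⟨-(q₁ : ℤ) - 1, q₂ - q₁, by omega, ?_⟩
  intro k hk
  obtain ⟨p₃, hp₃, hpbig⟩ := hv.exists_gt (max q₂ ((q₂ : ℤ) - q₁ - k).toNat)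
  have hp₃q : q₂ < p₃ := lt_of_le_of_lt (le_max_left _ _) hpbig
  have hp₃k : -(p₃ : ℤ) ≤ k - ((q₂ - q₁ : ℕ) : ℤ) := by
    have h1 : ((q₂ : ℤ) - q₁ - k).toNat < p₃ := lt_of_le_of_lt (le_max_right _ _) hpbig
    have h2 : (q₂ : ℤ) - q₁ - k ≤ (((q₂ : ℤ) - q₁ - k).toNat : ℤ) := Int.self_le_toNat _
    push_cast
    omega
  have hcomp := compare f hf H (-(p₃ : ℤ)) (-(q₂ : ℤ)) (-(q₁ : ℤ))
    (by exact_mod_cast Int.neg_lt_neg (by exact_mod_cast hp₃q)) (by omega)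
    (by simp only [Set.mem_preimage, Set.mem_singleton_iff] at hp₃ hq₂; rw [hp₃, hq₂])
    (by simp only [Set.mem_preimage, Set.mem_singleton_iff] at hq₂ hq₁; rw [hq₂, hq₁]) (k + p₃).toNat
    (by push_cast; omega)
  rw [if_neg (by push_cast; omega)] at hcomp
  calc f (k - ((q₂ - q₁ : ℕ) : ℤ))
      = f (-(p₃ : ℤ) + ((k + p₃).toNat : ℤ) - (-(q₁ : ℤ) - -(q₂ : ℤ))) := by
        exact findex f (by push_cast; omega)
    _ = f (-(p₃ : ℤ) + ((k + p₃).toNat : ℤ)) := hcomp.symm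
    _ = f k := findex f (by push_cast; omega)

end Stmt12Aux

namespace Stmt12Aux

variable {V E : Type*} {G : DirMultigraph V E}

lemma mod_fwd (f : ℤ → E) (n : ℤ) (a : ℕ) (ha : 0 < a)
    (h : ∀ k : ℤ, n ≤ k → f (k + a) = f k) :
    ∀ k : ℤ, n ≤ k → f k = f (n + (k - n) % a) := by
  have iter : ∀ (j : ℕ) (k : ℤ), n ≤ k → f (k + j * a) = f k := by
    intro j
    induction j with
    | zero => intro k hk; simp
    | succ j ih =>
      intro k hk
      have h1 : k + ((j + 1 : ℕ) : ℤ) * a = (k + a) + (j : ℤ) * a := by push_cast; ring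
      rw [h1, ih (k + a) (by omega), h k hk]
  intro k hk
  have hr0 : 0 ≤ (k - n) % (a : ℤ) := Int.emod_nonneg _ (by omega)
  have hq0 : 0 ≤ (k - n) / (a : ℤ) := Int.ediv_nonneg (by omega) (by omega)
  have hdm := Int.mul_ediv_add_emod (k - n) (a : ℤ)
  have hkey : k = (n + (k - n) % (a : ℤ)) + (((k - n) / (a : ℤ)).toNat : ℤ) * a := by
    rw [Int.toNat_of_nonneg hq0]
    linarith [hdm]
  rw [show f k = f ((n + (k - n) % (a : ℤ)) + (((k - n) / (a : ℤ)).toNat : ℤ) * a) from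
    findex f hkey]
  exact iter _ _ (by omega)

lemma mod_bwd (f : ℤ → E) (m : ℤ) (b : ℕ) (hb : 0 < b)
    (h : ∀ k : ℤ, k ≤ m → f (k - b) = f k) :
    ∀ k : ℤ, k < m → f k = f (m - b + (k - m) % b) := by
  have iter : ∀ (j : ℕ) (k : ℤ), k ≤ m → f (k - j * b) = f k := by
    intro j
    induction j with
    | zero => intro k hk; simp
    | succ j ih =>
      intro k hk
      have h1 : k - ((j + 1 : ℕ) : ℤ) * b = (k - j * b) - b := by push_cast; ring
      rw [h1, h (k - j * b) (by linarith [mul_nonneg (Int.natCast_nonneg j) (Int.natCast_nonneg b)]), ih k hk]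
  intro k hk
  have hr0 : 0 ≤ (k - m) % (b : ℤ) := Int.emod_nonneg _ (by omega)
  have hrb : (k - m) % (b : ℤ) < b := Int.emod_lt_of_pos _ (by omega)
  have hqneg : (k - m) / (b : ℤ) < 0 := Int.ediv_neg_of_neg_of_pos (by omega) (by omega)
  have hdm := Int.mul_ediv_add_emod (k - m) (b : ℤ)
  set j : ℕ := (-((k - m) / (b : ℤ)) - 1).toNat with hj
  have hjv : (j : ℤ) = -((k - m) / (b : ℤ)) - 1 := Int.toNat_of_nonneg (by omega)
  have hkey : k = (m - b + (k - m) % (b : ℤ)) - (j : ℤ) * b := by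
    rw [hjv]; linarith [hdm]
  rw [show f k = f ((m - b + (k - m) % (b : ℤ)) - (j : ℤ) * b) from findex f hkey]
  exact iter _ _ (by omega)

lemma getD_range_map (g : ℕ → E) (e₀ : E) (b j : ℕ) (h : j < b) :
    ((List.range b).map g).getD j e₀ = g j := by
  simp [List.getD, h]

lemma countable_of_no_pair [Finite V] [Finite E]
    (H : ∀ (v : V) (ℓ : ℕ), 0 < ℓ → ∀ w₁ w₂ : ℕ → E,
      G.IsClosedWalk v ℓ w₁ → G.IsClosedWalk v ℓ w₂ → ∀ i < ℓ, w₁ i = w₂ i) :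
    {f : ℤ → E | G.IsBiInfinitePath f}.Countable := by
  rcases Set.eq_empty_or_nonempty {f : ℤ → E | G.IsBiInfinitePath f} with hS | ⟨f₀, hf₀⟩
  · rw [hS]; exact Set.countable_empty
  have e₀ : E := f₀ 0
  set F : ℤ × ℤ × List E × List E × List E → (ℤ → E) := fun t k =>
    if k < t.1 then t.2.2.1.getD ((k - t.1) % t.2.2.1.length).toNat e₀
    else if k < t.2.1 then t.2.2.2.1.getD (k - t.1).toNat e₀
    else t.2.2.2.2.getD ((k - t.2.1) % t.2.2.2.2.length).toNat e₀ with hF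
  have : Countable E := Finite.to_countable
  apply Set.Countable.mono ?_ (Set.countable_range F)
  intro f hf
  obtain ⟨n₀, a, ha, hfw⟩ := fwd_periodic f hf H
  obtain ⟨m, b, hb, hbw⟩ := bwd_periodic f hf H
  set n : ℤ := max n₀ m with hn
  have hfw' : ∀ k : ℤ, n ≤ k → f (k + a) = f k := fun k hk => hfw k (by omega)
  have hmn : m ≤ n := le_max_right _ _
  refine ⟨(m, n, (List.range b).map (fun j : ℕ => f (m - b + (j:ℤ))),
    (List.range (n - m).toNat).map (fun j : ℕ => f (m + (j:ℤ))),
    (List.range a).map (fun j : ℕ => f (n + (j:ℤ)))), ?_⟩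
  funext k
  simp only [hF]
  by_cases h1 : k < m
  · rw [if_pos h1]
    have hlen : ((List.range b).map (fun j : ℕ => f (m - b + (j:ℤ)))).length = b := by simp
    rw [hlen]
    have hr0 : 0 ≤ (k - m) % (b : ℤ) := Int.emod_nonneg _ (by omega)
    have hrb : (k - m) % (b : ℤ) < b := Int.emod_lt_of_pos _ (by omega)
    rw [getD_range_map _ _ _ _ (by omega : ((k - m) % (b : ℤ)).toNat < b)]
    rw [mod_bwd f m b hb hbw k h1]
    exact (findex f (by omega)).symm
  · rw [if_neg h1]
    by_cases h2 : k < n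
    · rw [if_pos h2]
      rw [getD_range_map _ _ _ _ (by omega : (k - m).toNat < (n - m).toNat)]
      exact (findex f (by omega)).symm
    · rw [if_neg h2]
      have hlen : ((List.range a).map (fun j : ℕ => f (n + (j:ℤ)))).length = a := by simp
      rw [hlen]
      have hr0 : 0 ≤ (k - n) % (a : ℤ) := Int.emod_nonneg _ (by omega)
      have hra : (k - n) % (a : ℤ) < a := Int.emod_lt_of_pos _ (by omega)
      rw [getD_range_map _ _ _ _ (by omega : ((k - n) % (a : ℤ)).toNat < a)]
      rw [mod_fwd f n a ha hfw' k (by omega)]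
      exact (findex f (by omega)).symm

end Stmt12Aux

namespace Stmt12Aux

variable {V E : Type*} {G : DirMultigraph V E}

lemma not_countable_bool : ¬ Countable (ℕ → Bool) := by
  intro h
  have h2 : Countable (Set ℕ) :=
    Countable.of_equiv (ℕ → Bool) (Equiv.arrowCongr (Equiv.refl ℕ) Equiv.propEquivBool.symm)
  obtain ⟨g, hg⟩ := exists_injective_nat (Set ℕ)
  exact Function.cantor_injective g hg

lemma uncountable_of_pair (v : V) (ℓ : ℕ) (hℓ : 0 < ℓ) (w₁ w₂ : ℕ → E)
    (h₁ : G.IsClosedWalk v ℓ w₁) (h₂ : G.IsClosedWalk v ℓ w₂)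
    (i₀ : ℕ) (hi₀ : i₀ < ℓ) (hne : w₁ i₀ ≠ w₂ i₀) :
    ¬ {f : ℤ → E | G.IsBiInfinitePath f}.Countable := by
  intro hcount
  set W : Bool → ℕ → E := fun x => bif x then w₁ else w₂ with hW
  have hWwalk : ∀ x : Bool, G.IsClosedWalk v ℓ (W x) := by
    intro x; cases x
    · exact h₂
    · exact h₁
  set Φ : (ℕ → Bool) → (ℤ → E) := fun σ k =>
    W (σ ((k / (ℓ : ℤ)).toNat)) ((k % (ℓ : ℤ)).toNat) with hΦ
  -- basic div/mod facts
  have hℓZ : (0 : ℤ) < (ℓ : ℤ) := by exact_mod_cast hℓ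
  have hmod : ∀ k : ℤ, 0 ≤ k % (ℓ : ℤ) ∧ k % (ℓ : ℤ) < ℓ :=
    fun k => ⟨Int.emod_nonneg _ (by omega), Int.emod_lt_of_pos _ hℓZ⟩
  -- each Φ σ is a bi-infinite path
  have hpath : ∀ σ, G.IsBiInfinitePath (Φ σ) := by
    intro σ k
    obtain ⟨hm0, hmℓ⟩ := hmod k
    have hdm := Int.mul_ediv_add_emod k (ℓ : ℤ)
    by_cases hlast : k % (ℓ : ℤ) + 1 < ℓ
    · -- same block
      have hdiv : (k + 1) / (ℓ : ℤ) = k / (ℓ : ℤ) := by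
        rw [show k + 1 = (k % (ℓ : ℤ) + 1) + (ℓ : ℤ) * (k / (ℓ : ℤ)) by linarith,
          Int.add_mul_ediv_left _ _ (by omega : (ℓ:ℤ) ≠ 0),
          Int.ediv_eq_zero_of_lt (by omega) (by omega), zero_add]
      have hmod1 : (k + 1) % (ℓ : ℤ) = k % (ℓ : ℤ) + 1 := by
        rw [show k + 1 = (k % (ℓ : ℤ) + 1) + (ℓ : ℤ) * (k / (ℓ : ℤ)) by linarith,
          Int.add_mul_emod_self_left, Int.emod_eq_of_lt (by omega) (by omega)]
      simp only [hΦ, hdiv, hmod1]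
      rw [show (k % (ℓ:ℤ) + 1).toNat = (k % (ℓ:ℤ)).toNat + 1 by omega]
      exact (hWwalk _).2.2 _ (by omega)
    · -- block boundary: k % ℓ = ℓ - 1
      have hkl : k % (ℓ : ℤ) = (ℓ : ℤ) - 1 := by omega
      have hdiv : (k + 1) / (ℓ : ℤ) = k / (ℓ : ℤ) + 1 := by
        rw [show k + 1 = (ℓ : ℤ) * (k / (ℓ : ℤ) + 1) by linarith,
          Int.mul_ediv_cancel_left _ (by omega : (ℓ:ℤ) ≠ 0)]
      have hmod1 : (k + 1) % (ℓ : ℤ) = 0 := by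
        rw [show k + 1 = (ℓ : ℤ) * (k / (ℓ : ℤ) + 1) by linarith]
        exact Int.mul_emod_right _ _
      simp only [hΦ, hdiv, hmod1]
      rw [show (k % (ℓ:ℤ)).toNat = ℓ - 1 by omega, show ((0:ℤ)).toNat = 0 by rfl]
      rw [(hWwalk _).2.1, (hWwalk _).1]
  -- injectivity
  have hinj : Function.Injective Φ := by
    intro σ τ hst
    funext c
    by_contra hc
    have hkey := congrFun hst ((c : ℤ) * ℓ + i₀)
    have hdiv : ((c : ℤ) * ℓ + i₀) / (ℓ : ℤ) = c := by
      rw [show (c : ℤ) * ℓ + i₀ = (i₀ : ℤ) + (ℓ : ℤ) * c by ring,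
        Int.add_mul_ediv_left _ _ (by omega : (ℓ:ℤ) ≠ 0),
        Int.ediv_eq_zero_of_lt (by omega) (by exact_mod_cast hi₀), zero_add]
    have hmod1 : ((c : ℤ) * ℓ + i₀) % (ℓ : ℤ) = i₀ := by
      rw [show (c : ℤ) * ℓ + i₀ = (i₀ : ℤ) + (ℓ : ℤ) * c by ring,
        Int.add_mul_emod_self_left, Int.emod_eq_of_lt (by omega) (by exact_mod_cast hi₀)]
    simp only [hΦ, hdiv, hmod1, Int.toNat_natCast] at hkey
    cases hσ : σ c <;> cases hτ : τ c <;>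
      simp only [hσ, hτ, hW, cond_true, cond_false] at hkey hc <;> tauto
  -- contradiction with countability
  have hsub : Set.range Φ ⊆ {f : ℤ → E | G.IsBiInfinitePath f} := by
    rintro - ⟨σ, rfl⟩
    exact hpath σ
  have huniv : (Set.univ : Set (ℕ → Bool)).Countable := by
    have : (Φ ⁻¹' {f : ℤ → E | G.IsBiInfinitePath f}).Countable := hcount.preimage hinj
    have heq : Φ ⁻¹' {f : ℤ → E | G.IsBiInfinitePath f} = Set.univ := by
      ext σ; simp [hpath σ]
    rwa [heq] at this
  exact not_countable_bool (Set.countable_univ_iff.mp huniv)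

end Stmt12Aux

theorem stmt12 {V E : Type*} [Finite V] [Finite E] (G : DirMultigraph V E) :
    ¬ {f : ℤ → E | G.IsBiInfinitePath f}.Countable ↔
      ∃ (v : V) (ℓ : ℕ), 0 < ℓ ∧ ∃ w₁ w₂ : ℕ → E,
        G.IsClosedWalk v ℓ w₁ ∧ G.IsClosedWalk v ℓ w₂ ∧ ∃ i < ℓ, w₁ i ≠ w₂ i := by
  constructor
  · intro hnc
    by_contra hno
    push_neg at hno
    apply hnc
    apply Stmt12Aux.countable_of_no_pair
    intro v ℓ hℓ w₁ w₂ h₁ h₂ i hi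
    exact hno v ℓ hℓ w₁ w₂ h₁ h₂ i hi
  · rintro ⟨v, ℓ, hℓ, w₁, w₂, h₁, h₂, i₀, hi₀, hne⟩
    exact Stmt12Aux.uncountable_of_pair v ℓ hℓ w₁ w₂ h₁ h₂ i₀ hi₀ hne
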